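/- arXiv:1104.1864 — 3 statements merged into one kernel-verified Lean document; each statement's English description precedes it below -/
import Mathlib

section
/- Let σ² > 0, 0 ≤ s < t, and set c(u) = σ²/(σ²+u). Then for all x, y ∈ ℝ, p(t - s, y | x) = c(s)^{1/2} c(t)^{1/2} · exp(x²/(2(σ²+s)) − y²/(2(σ²+t))) · p(σ² c(s) − σ² c(t), c(s) x | c(t) y), where p is the one-dimensional Gaussian heat kernel. -/
open Real

/-- The one-dimensional Gaussian heat kernel `p(t, y | x)`. -/
noncomputable def heatKernel (t y x : ℝ) : ℝ :=
  (Real.sqrt (2 * π * t))⁻¹ * Real.exp (-(x - y) ^ 2 / (2 * t))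

/-- Time-reversal/dilatation identity for the Gaussian heat kernel:
`p(t-s, y|x) = c(s)^{1/2} c(t)^{1/2} e^{x²/2(σ²+s) - y²/2(σ²+t)}
  p(σ²c(s) - σ²c(t), c(s)x | c(t)y)` where `c(u) = σ²/(σ²+u)`. -/
theorem heatKernel_time_reversal (σ2 : ℝ) (hσ : 0 < σ2) (s t : ℝ)
    (hs : 0 ≤ s) (hst : s < t) (x y : ℝ) :
    heatKernel (t - s) y x
      = Real.sqrt (σ2 / (σ2 + s)) * Real.sqrt (σ2 / (σ2 + t)) *
        Real.exp (x ^ 2 / (2 * (σ2 + s)) - y ^ 2 / (2 * (σ2 + t))) *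
        heatKernel (σ2 * (σ2 / (σ2 + s)) - σ2 * (σ2 / (σ2 + t)))
          (σ2 / (σ2 + s) * x) (σ2 / (σ2 + t) * y) := by
  have hA : 0 < σ2 + s := by linarith
  have hB : 0 < σ2 + t := by linarith
  have hts : 0 < t - s := by linarith
  have hπ : 0 < π := Real.pi_pos
  have hτ : σ2 * (σ2 / (σ2 + s)) - σ2 * (σ2 / (σ2 + t))
      = σ2 ^ 2 * (t - s) / ((σ2 + s) * (σ2 + t)) := by
    field_simp
    ring
  unfold heatKernel
  rw [hτ]
  have h1 : Real.sqrt (σ2 / (σ2 + s)) * Real.sqrt (σ2 / (σ2 + t)) *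
      (Real.sqrt (2 * π * (σ2 ^ 2 * (t - s) / ((σ2 + s) * (σ2 + t)))))⁻¹
      = (Real.sqrt (2 * π * (t - s)))⁻¹ := by
    rw [← Real.sqrt_inv, ← Real.sqrt_mul (by positivity),
        ← Real.sqrt_mul (by positivity), ← Real.sqrt_inv]
    congr 1
    field_simp
  have h2 : Real.exp (x ^ 2 / (2 * (σ2 + s)) - y ^ 2 / (2 * (σ2 + t))) *
      Real.exp (-(σ2 / (σ2 + t) * y - σ2 / (σ2 + s) * x) ^ 2 /
        (2 * (σ2 ^ 2 * (t - s) / ((σ2 + s) * (σ2 + t)))))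
      = Real.exp (-(x - y) ^ 2 / (2 * (t - s))) := by
    rw [← Real.exp_add]
    congr 1
    field_simp
    ring
  rw [← h1, ← h2]
  ring
end

section
/- Let N ∈ ℕ, σ² > 0, and 0 < t_1 < ⋯ < t_M. Under the change of variables x^{(m)} ↦ c(t_m) x^{(m)} with c(u) = σ²/(σ²+u), the Gaussian determinantal transition factor satisfies f(t_{m+1} − t_m, x^{(m+1)} | x^{(m)}) = c(t_m)^{N/2} c(t_{m+1})^{N/2} exp(|x^{(m)}|²/(2(σ²+t_m)) − |x^{(m+1)}|²/(2(σ²+t_{m+1}))) · f(σ² c(t_m) − σ² c(t_{m+1}), c(t_m) x^{(m)} | c(t_{m+1}) x^{(m+1)}), where f(t, y | x) = det_{1≤j,k≤N}[p(t, y_j | x_k)] and p is the Gaussian heat kernel. -/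
open Real Finset

/-- The Karlin–McGregor determinantal transition factor
`f(t, y | x) = det [p(t, y_j | x_k)]`. -/
noncomputable def kmDet (N : ℕ) (t : ℝ) (y x : Fin N → ℝ) : ℝ :=
  Matrix.det (Matrix.of fun j k : Fin N => heatKernel t (y j) (x k))

lemma alg_key (A B S E F : ℝ) (hA : A ≠ 0) (hB : B ≠ 0) :
    S⁻¹ * (E * F) = A * B * E * ((A * (B * S))⁻¹ * F) := by
  field_simp
  try rw [show A * B * E * F = A * B * (E * F) from by ring,
    show A * (B * S) = A * B * S from by ring,
    mul_div_mul_left _ _ (mul_ne_zero hA hB)]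

lemma hk_scalar (σ2 a b : ℝ) (hσ : 0 < σ2) (ha : 0 < a) (hab : a < b) (u v : ℝ) :
    heatKernel (b - a) v u =
      Real.sqrt (σ2 / (σ2 + a)) * Real.sqrt (σ2 / (σ2 + b)) *
      Real.exp (u ^ 2 / (2 * (σ2 + a)) - v ^ 2 / (2 * (σ2 + b))) *
      heatKernel (σ2 * (σ2 / (σ2 + a)) - σ2 * (σ2 / (σ2 + b)))
        (σ2 / (σ2 + a) * u) (σ2 / (σ2 + b) * v) := by
  have hsa : 0 < σ2 + a := by linarith
  have hsb : 0 < σ2 + b := by linarith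
  have hba : 0 < b - a := by linarith
  have hca : 0 < σ2 / (σ2 + a) := by positivity
  have hcb : 0 < σ2 / (σ2 + b) := by positivity
  have hs : σ2 * (σ2 / (σ2 + a)) - σ2 * (σ2 / (σ2 + b))
      = σ2 / (σ2 + a) * (σ2 / (σ2 + b) * (b - a)) := by
    field_simp; ring
  unfold heatKernel
  rw [hs]
  rw [show 2 * π * (σ2 / (σ2 + a) * (σ2 / (σ2 + b) * (b - a)))
      = σ2 / (σ2 + a) * (σ2 / (σ2 + b) * (2 * π * (b - a))) by ring]
  rw [Real.sqrt_mul hca.le, Real.sqrt_mul hcb.le]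
  have h1 : Real.sqrt (σ2 / (σ2 + a)) ≠ 0 := by positivity
  have h2 : Real.sqrt (σ2 / (σ2 + b)) ≠ 0 := by positivity
  have hexp : Real.exp (u ^ 2 / (2 * (σ2 + a)) - v ^ 2 / (2 * (σ2 + b))) *
      Real.exp (-(σ2 / (σ2 + b) * v - σ2 / (σ2 + a) * u) ^ 2 /
        (2 * (σ2 / (σ2 + a) * (σ2 / (σ2 + b) * (b - a)))))
      = Real.exp (-(u - v) ^ 2 / (2 * (b - a))) := by
    rw [← Real.exp_add]
    congr 1
    field_simp
    ring
  rw [← hexp]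
  exact alg_key _ _ _ _ _ h1 h2

/-- Time-reversal/dilatation identity for the Gaussian determinantal factor:
with `c(u) = σ²/(σ²+u)` and `0 < a < b`,
`f(b-a, y | x) = c(a)^{N/2} c(b)^{N/2} e^{|x|²/2(σ²+a) - |y|²/2(σ²+b)}
  f(σ²c(a) - σ²c(b), c(a)x | c(b)y)`. -/
theorem kmDet_time_reversal (N : ℕ) (σ2 : ℝ) (hσ : 0 < σ2)
    (a b : ℝ) (ha : 0 < a) (hab : a < b) (x y : Fin N → ℝ) :
    kmDet N (b - a) y x
      = (σ2 / (σ2 + a)) ^ ((N : ℝ) / 2) * (σ2 / (σ2 + b)) ^ ((N : ℝ) / 2) *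
        Real.exp ((∑ j, x j ^ 2) / (2 * (σ2 + a)) - (∑ j, y j ^ 2) / (2 * (σ2 + b))) *
        kmDet N (σ2 * (σ2 / (σ2 + a)) - σ2 * (σ2 / (σ2 + b)))
          (fun j => σ2 / (σ2 + a) * x j) (fun k => σ2 / (σ2 + b) * y k) := by
  have hsa : 0 < σ2 + a := by linarith
  have hsb : 0 < σ2 + b := by linarith
  have hca : 0 < σ2 / (σ2 + a) := by positivity
  have hcb : 0 < σ2 / (σ2 + b) := by positivity
  set s : ℝ := σ2 * (σ2 / (σ2 + a)) - σ2 * (σ2 / (σ2 + b)) with hs_def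
  set r : Fin N → ℝ := fun j =>
    Real.sqrt (σ2 / (σ2 + a)) * Real.exp (x j ^ 2 / (2 * (σ2 + a))) with hr
  set c : Fin N → ℝ := fun k =>
    Real.sqrt (σ2 / (σ2 + b)) * Real.exp (-(y k ^ 2) / (2 * (σ2 + b))) with hc
  set A : Matrix (Fin N) (Fin N) ℝ := Matrix.of fun j k =>
    heatKernel s (σ2 / (σ2 + a) * x j) (σ2 / (σ2 + b) * y k) with hA
  have hM : (Matrix.of fun j k : Fin N => heatKernel (b - a) (y j) (x k))
      = Matrix.transpose (Matrix.of fun j k : Fin N => r j * ((Matrix.of fun j k : Fin N => c k * A j k) j k)) := by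
    ext j k
    show heatKernel (b - a) (y j) (x k) = r k * (c j * A k j)
    rw [hk_scalar σ2 a b hσ ha hab (x k) (y j), hr, hc, hA]
    simp only [Matrix.of_apply]
    rw [sub_eq_add_neg, Real.exp_add, neg_div]
    ring
  unfold kmDet
  rw [hM, Matrix.det_transpose, Matrix.det_mul_column r _, Matrix.det_mul_row c A]
  have hprodr : ∏ j, r j = (σ2 / (σ2 + a)) ^ ((N : ℝ) / 2) *
      Real.exp ((∑ j, x j ^ 2) / (2 * (σ2 + a))) := by
    rw [hr]
    rw [Finset.prod_mul_distrib, Finset.prod_const, ← Real.exp_sum, ← Finset.sum_div]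
    congr 1
    rw [Finset.card_univ, Fintype.card_fin]
    rw [Real.sqrt_eq_rpow, ← Real.rpow_natCast (_ ^ (1 / 2 : ℝ)) N, ← Real.rpow_mul hca.le]
    congr 1
    ring
  have hprodc : ∏ k, c k = (σ2 / (σ2 + b)) ^ ((N : ℝ) / 2) *
      Real.exp (-((∑ k, y k ^ 2) / (2 * (σ2 + b)))) := by
    rw [hc]
    rw [Finset.prod_mul_distrib, Finset.prod_const, ← Real.exp_sum]
    congr 1
    · rw [Finset.card_univ, Fintype.card_fin]
      rw [Real.sqrt_eq_rpow, ← Real.rpow_natCast (_ ^ (1 / 2 : ℝ)) N, ← Real.rpow_mul hcb.le]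
      congr 1
      ring
    · congr 1
      rw [← Finset.sum_div, Finset.sum_neg_distrib, neg_div]
  rw [hprodr, hprodc, sub_eq_add_neg, Real.exp_add]
  ring
end

section
/- For the Karlin–McGregor determinant with Gaussian kernel: for any t > 0 and x, y ∈ ℝ^N with x_1 < ⋯ < x_N and y_1 < ⋯ < y_N, the determinant f(t, y | x) = det_{1≤j,k≤N}[p(t, y_j | x_k)] is strictly positive. -/
open Real

open Matrix Filter Set Function Finset in
/-- Exponential functions with distinct exponents are linearly independent on any
set of `n` distinct points (a consequence of Rolle's theorem). -/
lemma exp_lin_indep : ∀ (n : ℕ) (b : Fin n → ℝ), StrictMono b →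
    ∀ (c : Fin n → ℝ) (a : Fin n → ℝ), StrictMono a →
    (∀ j, ∑ k, c k * Real.exp (b k * a j) = 0) → ∀ k, c k = 0 := by
  intro n
  induction n with
  | zero => intro _ _ _ _ _ _ k; exact k.elim0
  | succ n ih =>
    intro b hb c a ha h
    have hsucc : ∀ k : Fin n, c k.succ = 0 := by
      set g : ℝ → ℝ := fun x => ∑ k, c k * Real.exp ((b k - b 0) * x) with hgdef
      have hgzero : ∀ j, g (a j) = 0 := by
        intro j
        have : g (a j) = (∑ k, c k * Real.exp (b k * a j)) * Real.exp (-(b 0 * a j)) := by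
          simp only [hgdef, Finset.sum_mul]
          refine Finset.sum_congr rfl fun k _ => ?_
          rw [mul_assoc, ← Real.exp_add]
          ring_nf
        rw [this, h j, zero_mul]
      have hderiv : ∀ x, HasDerivAt g
          (∑ k, c k * (Real.exp ((b k - b 0) * x) * ((b k - b 0) * 1))) x := by
        intro x
        apply HasDerivAt.fun_sum
        intro k _
        exact (((hasDerivAt_id x).const_mul (b k - b 0)).exp).const_mul (c k)
      have hxi : ∀ j : Fin n, ∃ ξ, ξ ∈ Set.Ioo (a j.castSucc) (a j.succ) ∧
          (∑ k, c k * (Real.exp ((b k - b 0) * ξ) * ((b k - b 0) * 1))) = 0 := by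
        intro j
        have hlt : a j.castSucc < a j.succ := ha (Fin.castSucc_lt_succ (i := j))
        obtain ⟨ξ, hξ, hz⟩ := exists_hasDerivAt_eq_zero hlt
          (fun x _ => (hderiv x).continuousAt.continuousWithinAt)
          (by rw [hgzero, hgzero]) (fun x _ => hderiv x)
        exact ⟨ξ, hξ, hz⟩
      choose ξ hξmem hξzero using hxi
      have hξmono : StrictMono ξ := by
        intro i j hij
        calc ξ i < a i.succ := (hξmem i).2
          _ ≤ a j.castSucc := ha.monotone (by
            simp only [Fin.le_def, Fin.val_succ, Fin.coe_castSucc]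
            exact hij)
          _ < ξ j := (hξmem j).1
      have h0 : ∀ k : Fin n, c k.succ * (b k.succ - b 0) = 0 := by
        refine ih (fun k => b k.succ - b 0)
          (fun i j hij => by
            have := hb (show i.succ < j.succ from Fin.succ_lt_succ_iff.2 hij)
            dsimp only; linarith)
          (fun k => c k.succ * (b k.succ - b 0)) ξ hξmono ?_
        intro j
        have e1 : ∀ k : Fin n, (c k.succ * (b k.succ - b 0)) * Real.exp ((b k.succ - b 0) * ξ j)
            = c k.succ * (Real.exp ((b k.succ - b 0) * ξ j) * ((b k.succ - b 0) * 1)) :=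
          fun k => by ring
        rw [Finset.sum_congr rfl fun k _ => e1 k]
        have h2 := hξzero j
        rw [Fin.sum_univ_succ] at h2
        simpa using h2
      intro k
      have hbpos : 0 < b k.succ - b 0 := sub_pos.2 (hb (Fin.succ_pos k))
      have := h0 k
      rcases mul_eq_zero.1 this with h | h
      · exact h
      · exact absurd h hbpos.ne'
    intro k
    refine Fin.cases ?_ hsucc k
    have h2 := h 0
    rw [Fin.sum_univ_succ] at h2
    simp only [hsucc, zero_mul, Finset.sum_const_zero, add_zero] at h2
    rcases mul_eq_zero.1 h2 with h | h
    · exact h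
    · exact absurd h (Real.exp_ne_zero _)

open Matrix in
lemma expDet_ne_zero (n : ℕ) (a b : Fin n → ℝ) (ha : StrictMono a) (hb : StrictMono b) :
    Matrix.det (Matrix.of fun j k : Fin n => Real.exp (a j * b k)) ≠ 0 := by
  intro hdet
  obtain ⟨v, hv0, hv⟩ := (Matrix.exists_mulVec_eq_zero_iff).2 hdet
  refine hv0 (funext fun k => ?_)
  refine exp_lin_indep n b hb v a ha (fun j => ?_) k
  have h := congrFun hv j
  simp only [Matrix.mulVec, dotProduct, Matrix.of_apply, Pi.zero_apply] at h
  rw [← h]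
  exact Finset.sum_congr rfl fun i _ => by ring

open Matrix Filter Set Function Topology in
lemma expDet_pos : ∀ (n : ℕ) (a b : Fin n → ℝ), StrictMono a → StrictMono b →
    0 < Matrix.det (Matrix.of fun j k : Fin n => Real.exp (a j * b k)) := by
  intro n
  induction n with
  | zero =>
    intro a b _ _
    norm_num [Matrix.det_fin_zero]
  | succ n ih =>
    intro a b ha hb
    set L : Fin (n + 1) := Fin.last n with hL
    set g : ℝ → ℝ := fun s =>
      Matrix.det (Matrix.of fun j k : Fin (n+1) => Real.exp (a j * Function.update b L s k))
      with hgdef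
    set D : Fin (n+1) → ℝ := fun i =>
      Matrix.det (Matrix.of fun j' k' : Fin n => Real.exp (a (i.succAbove j') * b k'.castSucc))
      with hD
    -- monotone-update transfer
    have hupd : ∀ s₁ s₂ : ℝ, s₁ ≤ s₂ → StrictMono (Function.update b L s₁) →
        StrictMono (Function.update b L s₂) := by
      intro s₁ s₂ hs h1 i j hij
      rcases eq_or_ne j L with rfl | hj
      · have hi : i ≠ L := ne_of_lt hij
        have h2 := h1 hij
        rw [Function.update_of_ne hi, Function.update_self] at h2
        rw [Function.update_of_ne hi, Function.update_self]
        linarith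
      · have hi : i ≠ L := by
          intro hiL
          rw [hiL] at hij
          exact absurd hij (not_lt.2 (Fin.le_last j))
        rw [Function.update_of_ne hi, Function.update_of_ne hj]
        exact hb hij
    have hbL : StrictMono (Function.update b L (b L)) := by
      rw [Function.update_eq_self]; exact hb
    have hne : ∀ s, StrictMono (Function.update b L s) → g s ≠ 0 := by
      intro s hs
      simp only [hgdef]
      exact expDet_ne_zero (n+1) a _ ha hs
    have hgcont : Continuous g := by
      simp only [hgdef]
      refine Continuous.matrix_det ?_
      refine continuous_matrix fun j k => ?_
      simp only [Matrix.of_apply, Function.update_apply]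
      by_cases hk : k = L
      · simp only [hk, if_pos rfl]
        exact Real.continuous_exp.comp (continuous_const.mul continuous_id)
      · simp only [if_neg hk]
        exact continuous_const
    -- cofactor expansion along the last column
    have hexp : ∀ s, g s = ∑ i : Fin (n+1), (-1:ℝ) ^ ((i:ℕ) + n) * Real.exp (a i * s) * D i := by
      intro s
      simp only [hgdef, hD]
      rw [Matrix.det_succ_column _ L]
      refine Finset.sum_congr rfl fun i _ => ?_
      have h1 : (Matrix.of fun j k : Fin (n+1) => Real.exp (a j * Function.update b L s k)) i L
          = Real.exp (a i * s) := by
        simp [Function.update_self]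
      have h2 : ((Matrix.of fun j k : Fin (n+1) =>
            Real.exp (a j * Function.update b L s k)).submatrix i.succAbove L.succAbove)
          = Matrix.of fun j' k' : Fin n => Real.exp (a (i.succAbove j') * b k'.castSucc) := by
        ext j' k'
        simp only [Matrix.submatrix_apply, Matrix.of_apply, hL, Fin.succAbove_last]
        rw [Function.update_of_ne (Fin.castSucc_lt_last k').ne]
      rw [h1, h2]
      simp [hL]
    -- limit of e^{-a_L s} g(s) as s → ∞
    have hterm : ∀ i : Fin (n+1), Tendsto
        (fun s => (-1:ℝ) ^ ((i:ℕ) + n) * Real.exp ((a i - a L) * s) * D i) atTop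
        (𝓝 (if i = L then D L else 0)) := by
      intro i
      rcases eq_or_ne i L with rfl | hi
      · have hone : ((-1:ℝ)) ^ ((L:ℕ) + n) = 1 := by
          have hv : (L:ℕ) = n := by simp [hL]
          rw [hv]
          exact Even.neg_one_pow ⟨n, rfl⟩
        simp only [if_pos rfl, sub_self, zero_mul, Real.exp_zero, mul_one, hone, one_mul]
        exact tendsto_const_nhds
      · have hlt : a i < a L := ha (lt_of_le_of_ne (Fin.le_last i) (by simpa [hL] using hi))
        have h0 : Tendsto (fun s : ℝ => (a L - a i) * s) atTop atTop :=
          Tendsto.const_mul_atTop (by linarith) tendsto_id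
        have h1 : Tendsto (fun s : ℝ => (a i - a L) * s) atTop atBot := by
          refine (tendsto_neg_atTop_atBot.comp h0).congr fun s => ?_
          simp only [Function.comp_apply]
          ring
        have h3 : Tendsto (fun s => Real.exp ((a i - a L) * s)) atTop (𝓝 0) :=
          Real.tendsto_exp_atBot.comp h1
        have h4 := (h3.const_mul ((-1:ℝ) ^ ((i:ℕ) + n))).mul_const (D i)
        simpa [if_neg hi] using h4
    have hC : 0 < D L := by
      have h := ih (a ∘ Fin.castSucc) (b ∘ Fin.castSucc)
        (ha.comp Fin.strictMono_castSucc) (hb.comp Fin.strictMono_castSucc)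
      simp only [hD, hL, Fin.succAbove_last]
      simpa [Function.comp] using h
    have hkey : Tendsto (fun s => Real.exp (-(a L) * s) * g s) atTop (𝓝 (D L)) := by
      have hsum : Tendsto (fun s => ∑ i : Fin (n+1),
          (-1:ℝ) ^ ((i:ℕ) + n) * Real.exp ((a i - a L) * s) * D i) atTop (𝓝 (D L)) := by
        have h := tendsto_finset_sum Finset.univ (fun i (_ : i ∈ Finset.univ) => hterm i)
        simpa [Finset.sum_ite_eq'] using h
      refine hsum.congr fun s => ?_
      rw [hexp s, Finset.mul_sum]
      refine Finset.sum_congr rfl fun i _ => ?_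
      have he : Real.exp (-(a L) * s) * Real.exp (a i * s) = Real.exp ((a i - a L) * s) := by
        rw [← Real.exp_add]; congr 1; ring
      rw [← he]
      ring
    have hev : ∀ᶠ s in atTop, 0 < Real.exp (-(a L) * s) * g s :=
      hkey.eventually (eventually_gt_nhds hC)
    obtain ⟨s₀, hs₀pos, hs₀ge⟩ :
        ∃ s₀, 0 < Real.exp (-(a L) * s₀) * g s₀ ∧ b L ≤ s₀ := by
      obtain ⟨s₀, h1, h2⟩ := (hev.and (eventually_ge_atTop (b L))).exists
      exact ⟨s₀, h1, h2⟩
    have hg₀ : 0 < g s₀ := by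
      have hepos := Real.exp_pos (-(a L) * s₀)
      nlinarith
    have hgbne : g (b L) ≠ 0 := hne _ hbL
    have hfinal : 0 < g (b L) := by
      rcases hgbne.lt_or_gt with hneg | hpos
      · exfalso
        have hmem : (0:ℝ) ∈ Set.uIcc (g (b L)) (g s₀) :=
          Set.mem_uIcc.2 (Or.inl ⟨hneg.le, hg₀.le⟩)
        obtain ⟨u, hu, hgu⟩ := intermediate_value_uIcc (hgcont.continuousOn) hmem
        rw [Set.uIcc_of_le hs₀ge] at hu
        exact hne u (hupd _ _ hu.1 hbL) hgu
      · exact hpos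
    have : g (b L) = Matrix.det (Matrix.of fun j k : Fin (n+1) => Real.exp (a j * b k)) := by
      simp only [hgdef, Function.update_eq_self]
    rwa [this] at hfinal

open Matrix in
/-- Total positivity of the Gaussian kernel: the Karlin–McGregor determinant
`f(t, y | x) = det [p(t, y_j | x_k)]` is strictly positive for strictly
increasing tuples `x`, `y` and `t > 0`. -/
theorem kmDet_pos (N : ℕ) (t : ℝ) (ht : 0 < t) (x y : Fin N → ℝ)
    (hx : StrictMono x) (hy : StrictMono y) :
    0 < Matrix.det (Matrix.of fun j k : Fin N => heatKernel t (y j) (x k)) := by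
  have htne : t ≠ 0 := ht.ne'
  have hπt : 0 < 2 * π * t := by positivity
  set r : Fin N → ℝ := fun j => (Real.sqrt (2 * π * t))⁻¹ * Real.exp (-(y j) ^ 2 / (2 * t))
    with hr
  set c : Fin N → ℝ := fun k => Real.exp (-(x k) ^ 2 / (2 * t)) with hc
  have h1 : Matrix.det (Matrix.of fun j k : Fin N => heatKernel t (y j) (x k))
      = (∏ j, r j) * ((∏ k, c k) *
        Matrix.det (Matrix.of fun j k : Fin N => Real.exp ((y j / t) * x k))) := by
    rw [show (Matrix.of fun j k : Fin N => heatKernel t (y j) (x k))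
        = Matrix.of fun j k : Fin N => r j * ((Matrix.of fun j k : Fin N =>
            c k * ((Matrix.of fun j k : Fin N => Real.exp ((y j / t) * x k)) j k)) j k) from ?_]
    · rw [Matrix.det_mul_column, Matrix.det_mul_row]
    · ext j k
      simp only [Matrix.of_apply, hr, hc, heatKernel]
      have hexps : Real.exp (-(y j) ^ 2 / (2 * t)) * (Real.exp (-(x k) ^ 2 / (2 * t)) *
          Real.exp ((y j / t) * x k)) = Real.exp (-(x k - y j) ^ 2 / (2 * t)) := by
        rw [← Real.exp_add, ← Real.exp_add]
        congr 1
        field_simp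
        ring
      rw [← hexps]
      ring
  rw [h1]
  have hEpos := expDet_pos N (fun j => y j / t) x
    (fun i j hij => (div_lt_div_iff_of_pos_right ht).2 (hy hij)) hx
  refine mul_pos (Finset.prod_pos fun j _ => ?_) (mul_pos (Finset.prod_pos fun k _ => ?_) hEpos)
  · exact mul_pos (inv_pos.2 (Real.sqrt_pos.2 hπt)) (Real.exp_pos _)
  · exact Real.exp_pos _
end
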